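/- Let G be a finite group and H, K ≤ G subgroups. Then the following are equivalent: (i) for every conjugacy class C of G, |H ∩ C| = |K ∩ C|; (ii) for every g ∈ G, the number of fixed points of g acting on the coset space G/H equals the number of fixed points of g acting on the coset space G/K (equivalently, the permutation representations of G on G/H and on G/K give rise to equivalent linear representations). -/

import Mathlib

open CategoryTheory Finset
open scoped Classical

/-- `D_H`: the total variation distance between the weak quantum Fourier sampling
distributions for the hidden subgroup `H` and for the trivial subgroup, namely
`(1/|G|) · Σ_ρ d_ρ · |Σ_{h ∈ H, h ≠ e} χ_ρ(h)|`, where `ρ` runs over the family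
of irreducible representations. -/
noncomputable def weakDist {G : Type} [Group G] [Fintype G] {ι : Type} [Fintype ι]
    (ρ : ι → FDRep ℂ G) (H : Subgroup G) : ℝ :=
  (Fintype.card G : ℝ)⁻¹ *
    ∑ i : ι, (Module.finrank ℂ (ρ i) : ℝ) *
      ‖∑ h ∈ Finset.univ.filter (fun h : G => h ∈ H ∧ h ≠ 1), (ρ i).character h‖

/-- `ρ : ι → FDRep ℂ G` is a complete family of pairwise non-isomorphic irreducible
complex representations of `G` (one per isomorphism class). -/
def IsCompleteIrrepFamily {G : Type} [Group G] {ι : Type} (ρ : ι → FDRep ℂ G) : Prop :=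
  (∀ i, Simple (ρ i)) ∧
  (∀ i j, Nonempty (ρ i ≅ ρ j) → i = j) ∧
  (∀ V : FDRep ℂ G, Simple V → ∃ i, Nonempty (ρ i ≅ V))

set_option linter.unusedSectionVars false

section Helpers
variable {G : Type} [Group G] [Fintype G]

/-- Fiber of conjugation map is equivalent to the centralizer. -/
noncomputable def fiberEquivCentralizer (g h0 x0 : G) (hx0 : x0⁻¹ * g * x0 = h0) :
    {x : G // x⁻¹ * g * x = h0} ≃ Subgroup.centralizer ({g} : Set G) where
  toFun x := ⟨x.1 * x0⁻¹, by
    rw [Subgroup.mem_centralizer_singleton_iff]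
    have key : x.1⁻¹ * g * x.1 = x0⁻¹ * g * x0 := by rw [x.2, hx0]
    have := congrArg (fun y => x.1 * y * x0⁻¹) key
    simp only [mul_assoc] at this ⊢
    simpa [mul_assoc] using this.symm⟩
  invFun c := ⟨c.1 * x0, by
    have hc : c.1 * g = g * c.1 := Subgroup.mem_centralizer_singleton_iff.mp c.2
    have : (c.1 * x0)⁻¹ * g * (c.1 * x0) = x0⁻¹ * (c.1⁻¹ * g * c.1) * x0 := by group
    rw [this]
    have : c.1⁻¹ * g * c.1 = g := by
      rw [mul_assoc, ← hc, ← mul_assoc, inv_mul_cancel, one_mul]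
    rw [this, hx0]⟩
  left_inv x := by ext; simp [mul_assoc]
  right_inv c := by ext; simp [mul_assoc]

lemma lemA (H : Subgroup G) (g : G) :
    Nat.card {x : G | x⁻¹ * g * x ∈ H}
      = Nat.card H * Nat.card (MulAction.fixedBy (G ⧸ H) g) := by
  have hset : {x : G | x⁻¹ * g * x ∈ H}
      = QuotientGroup.mk ⁻¹' (MulAction.fixedBy (G ⧸ H) g) := by
    ext x
    simp only [Set.mem_setOf_eq, Set.mem_preimage, MulAction.mem_fixedBy]
    have : g • (QuotientGroup.mk x : G ⧸ H) = QuotientGroup.mk (g * x) := rfl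
    rw [this, QuotientGroup.eq]
    rw [show (g * x)⁻¹ * x = (x⁻¹ * g * x)⁻¹ by group]
    exact ⟨fun h => inv_mem h, fun h => by simpa using inv_mem h⟩
  rw [hset, Nat.card_congr (QuotientGroup.preimageMkEquivSubgroupProdSet H _), Nat.card_prod]

lemma lemB (H : Subgroup G) (g : G) :
    Nat.card {x : G | x⁻¹ * g * x ∈ H}
      = Nat.card (Subgroup.centralizer ({g} : Set G))
          * Nat.card ((ConjClasses.mk g).carrier ∩ (H : Set G) : Set G) := by
  classical
  set S := ((ConjClasses.mk g).carrier ∩ (H : Set G) : Set G)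
  let f : {x : G | x⁻¹ * g * x ∈ H} → S := fun x =>
    ⟨x.1⁻¹ * g * x.1, by
      constructor
      · rw [ConjClasses.mem_carrier_iff_mk_eq, ConjClasses.mk_eq_mk_iff_isConj]
        rw [isConj_iff]
        exact ⟨x.1, by simp [mul_assoc]⟩
      · exact x.2⟩
  have e1 : {x : G | x⁻¹ * g * x ∈ H} ≃ Σ h : S, {x : {x : G | x⁻¹ * g * x ∈ H} // f x = h} :=
    (Equiv.sigmaFiberEquiv f).symm
  rw [Nat.card_congr e1]
  rw [Nat.card_eq_fintype_card, Fintype.card_sigma]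
  have key : ∀ h : S, Fintype.card {x : {x : G | x⁻¹ * g * x ∈ H} // f x = h}
      = Nat.card (Subgroup.centralizer ({g} : Set G)) := by
    intro h
    have e2 : {x : {x : G | x⁻¹ * g * x ∈ H} // f x = h} ≃ {x : G // x⁻¹ * g * x = h.1} :=
      { toFun := fun x => ⟨x.1.1, by
          have := congrArg Subtype.val x.2
          exact this⟩
        invFun := fun x => ⟨⟨x.1, by
          show x.1⁻¹ * g * x.1 ∈ H
          rw [x.2]; exact h.2.2⟩, by
          apply Subtype.ext; exact x.2⟩
        left_inv := fun x => by ext; rfl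
        right_inv := fun x => by ext; rfl }
    obtain ⟨hcar, _⟩ := h.2
    rw [ConjClasses.mem_carrier_iff_mk_eq, ConjClasses.mk_eq_mk_iff_isConj, isConj_iff] at hcar
    obtain ⟨c, hc⟩ := hcar
    have hx0 : c⁻¹ * g * c = h.1 := by rw [← hc]; simp [mul_assoc]
    rw [← Nat.card_eq_fintype_card, Nat.card_congr e2,
      Nat.card_congr (fiberEquivCentralizer g h.1 c hx0)]
  simp only [key, Finset.sum_const, Finset.card_univ, smul_eq_mul]
  simp [Nat.card_eq_fintype_card, mul_comm]

lemma lemC (H : Subgroup G) :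
    Nat.card H = ∑ c : ConjClasses G, Nat.card (c.carrier ∩ (H : Set G) : Set G) := by
  classical
  let f : H → ConjClasses G := fun h => ConjClasses.mk h.1
  have e1 : (H : Type) ≃ Σ c : ConjClasses G, {h : H // f h = c} :=
    (Equiv.sigmaFiberEquiv f).symm
  rw [Nat.card_congr e1, Nat.card_eq_fintype_card, Fintype.card_sigma]
  apply Finset.sum_congr rfl
  intro c _
  rw [← Nat.card_eq_fintype_card]
  apply Nat.card_congr
  exact
    { toFun := fun h => ⟨h.1.1, by
        rw [Set.mem_inter_iff, ConjClasses.mem_carrier_iff_mk_eq]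
        exact ⟨h.2, h.1.2⟩⟩
      invFun := fun x => ⟨⟨x.1, x.2.2⟩, by
        show ConjClasses.mk x.1 = c
        exact ConjClasses.mem_carrier_iff_mk_eq.mp x.2.1⟩
      left_inv := fun h => by ext; rfl
      right_inv := fun x => by ext; rfl }

end Helpers

/-- `H` and `K` intersect each conjugacy class in sets of equal size
iff every `g ∈ G` has the same number of fixed points on `G/H` as on `G/K`
(i.e. the permutation representations on `G/H` and `G/K` afford the same character). -/
theorem stmt_12 {G : Type} [Group G] [Fintype G] (H K : Subgroup G) :
    (∀ c : ConjClasses G,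
        Nat.card (c.carrier ∩ (H : Set G) : Set G)
          = Nat.card (c.carrier ∩ (K : Set G) : Set G))
      ↔ ∀ g : G,
          Nat.card (MulAction.fixedBy (G ⧸ H) g) = Nat.card (MulAction.fixedBy (G ⧸ K) g) := by
  have hHpos : 0 < Nat.card H := Nat.card_pos
  have hKpos : 0 < Nat.card K := Nat.card_pos
  constructor
  · intro hcl g
    have hHK : Nat.card H = Nat.card K := by
      rw [lemC H, lemC K]; exact Finset.sum_congr rfl fun c _ => hcl c
    have h1 : Nat.card H * Nat.card (MulAction.fixedBy (G ⧸ H) g)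
        = Nat.card K * Nat.card (MulAction.fixedBy (G ⧸ K) g) := by
      rw [← lemA, ← lemA, lemB, lemB, hcl]
    rw [← hHK] at h1
    exact Nat.eq_of_mul_eq_mul_left hHpos h1
  · intro hfix c
    have hHK : Nat.card H = Nat.card K := by
      have h1 := hfix 1
      have hfb : ∀ (L : Subgroup G), MulAction.fixedBy (G ⧸ L) (1 : G) = Set.univ := by
        intro L; ext q; simp [MulAction.mem_fixedBy]
      rw [hfb H, hfb K, Nat.card_univ, Nat.card_univ] at h1
      have cH := Subgroup.card_eq_card_quotient_mul_card_subgroup H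
      have cK := Subgroup.card_eq_card_quotient_mul_card_subgroup K
      have hq : 0 < Nat.card (G ⧸ H) := Nat.card_pos
      have : Nat.card (G ⧸ H) * Nat.card H = Nat.card (G ⧸ H) * Nat.card K := by
        rw [← cH, h1, cK]
      exact Nat.eq_of_mul_eq_mul_left hq this
    obtain ⟨g, rfl⟩ := c.exists_rep
    have hcpos : 0 < Nat.card (Subgroup.centralizer ({g} : Set G)) := Nat.card_pos
    have h1 : Nat.card (Subgroup.centralizer ({g} : Set G))
          * Nat.card ((ConjClasses.mk g).carrier ∩ (H : Set G) : Set G)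
        = Nat.card (Subgroup.centralizer ({g} : Set G))
          * Nat.card ((ConjClasses.mk g).carrier ∩ (K : Set G) : Set G) := by
      rw [← lemB, ← lemB, lemA, lemA, hfix g, hHK]
    exact Nat.eq_of_mul_eq_mul_left hcpos h1
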